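/- For all finite hypergraphs H' and H'', the 2-section of their strong product equals the strong graph product of their 2-sections: [H' ⊠̂ H'']_2 = [H']_2 ⊠ [H'']_2 (equality of simple graphs on V(H')×V(H'')). -/

import Mathlib

/-!
Basic definitions: finite hypergraphs (a finite nonempty vertex set `V`, given by
`[Fintype V] [Nonempty V]`, together with a set of nonempty edges), walks, distance,
connectedness, simplicity, rank, colorings, Helly property, covers,
the various hypergraph products, 2-sections, and graph products.
-/

/-- A hypergraph on a vertex type `V`: a collection of nonempty edges (finite subsets of `V`). -/
structure Hypergraph' (V : Type*) where
  edges : Set (Finset V)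
  nonempty_edges : ∀ e ∈ edges, e.Nonempty

namespace Hypergraph'

variable {V V₁ V₂ : Type*}

/-- There is a walk of length `n` from `u` to `v`: a sequence of vertices `w 0, …, w n`
and edges `f 1, …, f n` with consecutive vertices distinct and both contained
in the corresponding edge. -/
def HasWalk (H : Hypergraph' V) (u v : V) (n : ℕ) : Prop :=
  ∃ (w : Fin (n + 1) → V) (f : Fin n → Finset V),
    w 0 = u ∧ w (Fin.last n) = v ∧
      ∀ i : Fin n, f i ∈ H.edges ∧ w i.castSucc ≠ w i.succ ∧
        w i.castSucc ∈ f i ∧ w i.succ ∈ f i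

/-- The distance between two vertices: the minimum length of a walk joining them,
`⊤ = ∞` if there is none. -/
noncomputable def dist (H : Hypergraph' V) (u v : V) : ℕ∞ :=
  sInf {x : ℕ∞ | ∃ n : ℕ, x = n ∧ H.HasWalk u v n}

/-- A hypergraph is connected if any two vertices are joined by a walk. -/
def Connected (H : Hypergraph' V) : Prop := ∀ u v : V, ∃ n, H.HasWalk u v n

/-- A hypergraph is simple if every edge has at least two vertices and
no edge is contained in another edge. -/
def Simple (H : Hypergraph' V) : Prop :=
  (∀ e ∈ H.edges, 2 ≤ e.card) ∧ ∀ e ∈ H.edges, ∀ f ∈ H.edges, e ⊆ f → e = f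

/-- A hypergraph is loopless if every edge has at least two vertices. -/
def Loopless (H : Hypergraph' V) : Prop := ∀ e ∈ H.edges, 2 ≤ e.card

/-- The rank: the maximum cardinality of an edge. -/
noncomputable def rank (H : Hypergraph' V) : ℕ := sSup (Finset.card '' H.edges)

/-- The anti-rank: the minimum cardinality of an edge. -/
noncomputable def antirank (H : Hypergraph' V) : ℕ := sInf (Finset.card '' H.edges)

/-- A proper coloring: no color class contains an edge. -/
def IsProperColoring (H : Hypergraph' V) {k : ℕ} (c : V → Fin k) : Prop :=
  ∀ e ∈ H.edges, ∀ i : Fin k, ¬ ∀ v ∈ e, c v = i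

/-- A proper strong coloring: a proper coloring in which the vertices of every
edge receive pairwise distinct colors. -/
def IsStrongColoring (H : Hypergraph' V) {k : ℕ} (c : V → Fin k) : Prop :=
  H.IsProperColoring c ∧ ∀ e ∈ H.edges, ∀ u ∈ e, ∀ v ∈ e, u ≠ v → c u ≠ c v

/-- The chromatic number: the least `k` admitting a proper `k`-coloring. -/
noncomputable def chromaticNumber (H : Hypergraph' V) : ℕ :=
  sInf {k : ℕ | ∃ c : V → Fin k, H.IsProperColoring c}

/-- The strong chromatic number: the least `k` admitting a proper strong `k`-coloring. -/
noncomputable def strongChromaticNumber (H : Hypergraph' V) : ℕ :=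
  sInf {k : ℕ | ∃ c : V → Fin k, H.IsStrongColoring c}

/-- The Helly property: every intersecting family of edges is a star. -/
def Helly (H : Hypergraph' V) : Prop :=
  ∀ E' ⊆ H.edges, (∀ e ∈ E', ∀ f ∈ E', ∃ x, x ∈ e ∧ x ∈ f) → ∃ v, ∀ e ∈ E', v ∈ e

/-- The covering number: the minimum cardinality of a set of vertices meeting every edge. -/
noncomputable def coverNumber (H : Hypergraph' V) : ℕ :=
  sInf {k : ℕ | ∃ T : Finset V, T.card = k ∧ ∀ e ∈ H.edges, ∃ v ∈ T, v ∈ e}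

/-- The Cartesian product of hypergraphs. -/
def cartProd (H₁ : Hypergraph' V₁) (H₂ : Hypergraph' V₂) : Hypergraph' (V₁ × V₂) where
  edges := {E | (∃ x, ∃ f ∈ H₂.edges, E = {x} ×ˢ f) ∨ ∃ e ∈ H₁.edges, ∃ y, E = e ×ˢ {y}}
  nonempty_edges := by
    rintro E (⟨x, f, hf, rfl⟩ | ⟨e, he, y, rfl⟩)
    · exact (Finset.singleton_nonempty x).product (H₂.nonempty_edges f hf)
    · exact (H₁.nonempty_edges e he).product (Finset.singleton_nonempty y)

section Products

variable [DecidableEq V₁] [DecidableEq V₂]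

/-- The minimal-rank-preserving direct product `H₁ ×̌ H₂`. -/
def minDirProd (H₁ : Hypergraph' V₁) (H₂ : Hypergraph' V₂) : Hypergraph' (V₁ × V₂) where
  edges := {E | ∃ e₁ ∈ H₁.edges, ∃ e₂ ∈ H₂.edges,
    E ⊆ e₁ ×ˢ e₂ ∧ E.card = min e₁.card e₂.card ∧
      (E.image Prod.fst).card = min e₁.card e₂.card ∧
      (E.image Prod.snd).card = min e₁.card e₂.card}
  nonempty_edges := by
    rintro E ⟨e₁, h₁, e₂, h₂, -, hc, -, -⟩
    rw [← Finset.card_pos, hc]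
    exact lt_min (Finset.card_pos.mpr (H₁.nonempty_edges e₁ h₁))
      (Finset.card_pos.mpr (H₂.nonempty_edges e₂ h₂))

/-- The maximal-rank-preserving direct product `H₁ ×̂ H₂`. -/
def maxDirProd (H₁ : Hypergraph' V₁) (H₂ : Hypergraph' V₂) : Hypergraph' (V₁ × V₂) where
  edges := {E | ∃ e₁ ∈ H₁.edges, ∃ e₂ ∈ H₂.edges,
    E ⊆ e₁ ×ˢ e₂ ∧ E.card = max e₁.card e₂.card ∧
      E.image Prod.fst = e₁ ∧ E.image Prod.snd = e₂}
  nonempty_edges := by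
    rintro E ⟨e₁, h₁, e₂, h₂, -, hc, -, -⟩
    rw [← Finset.card_pos, hc]
    exact lt_max_iff.mpr (Or.inl (Finset.card_pos.mpr (H₁.nonempty_edges e₁ h₁)))

/-- The non-rank-preserving direct product `H₁ ×̃ H₂`. -/
def nrDirProd (H₁ : Hypergraph' V₁) (H₂ : Hypergraph' V₂) : Hypergraph' (V₁ × V₂) where
  edges := {E | ∃ e ∈ H₁.edges, ∃ f ∈ H₂.edges, ∃ x ∈ e, ∃ y ∈ f,
    E = insert (x, y) ((e.erase x) ×ˢ (f.erase y))}
  nonempty_edges := by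
    rintro E ⟨e, -, f, -, x, -, y, -, rfl⟩
    exact Finset.insert_nonempty _ _

/-- The normal product `H₁ ⊠̌ H₂`: union of the Cartesian product edges and the
minimal-rank-preserving direct product edges. -/
def normalProd (H₁ : Hypergraph' V₁) (H₂ : Hypergraph' V₂) : Hypergraph' (V₁ × V₂) where
  edges := (H₁.cartProd H₂).edges ∪ (H₁.minDirProd H₂).edges
  nonempty_edges := by
    rintro E (h | h)
    · exact (H₁.cartProd H₂).nonempty_edges E h
    · exact (H₁.minDirProd H₂).nonempty_edges E h

/-- The strong product `H₁ ⊠̂ H₂`: union of the Cartesian product edges and the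
maximal-rank-preserving direct product edges. -/
def strongProd (H₁ : Hypergraph' V₁) (H₂ : Hypergraph' V₂) : Hypergraph' (V₁ × V₂) where
  edges := (H₁.cartProd H₂).edges ∪ (H₁.maxDirProd H₂).edges
  nonempty_edges := by
    rintro E (h | h)
    · exact (H₁.cartProd H₂).nonempty_edges E h
    · exact (H₁.maxDirProd H₂).nonempty_edges E h

/-- The lexicographic product `H₁ ∘ H₂`. -/
def lexProd (H₁ : Hypergraph' V₁) (H₂ : Hypergraph' V₂) : Hypergraph' (V₁ × V₂) where
  edges := {E | (E.image Prod.fst ∈ H₁.edges ∧ (E.image Prod.fst).card = E.card) ∨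
    ∃ x, ∃ e₂ ∈ H₂.edges, E = {x} ×ˢ e₂}
  nonempty_edges := by
    rintro E (⟨h₁, hc⟩ | ⟨x, e₂, h₂, rfl⟩)
    · rw [← Finset.card_pos, ← hc]
      exact Finset.card_pos.mpr (H₁.nonempty_edges _ h₁)
    · exact (Finset.singleton_nonempty x).product (H₂.nonempty_edges e₂ h₂)

end Products

/-- The square product `H₁ ■ H₂`. -/
def squareProd (H₁ : Hypergraph' V₁) (H₂ : Hypergraph' V₂) : Hypergraph' (V₁ × V₂) where
  edges := {E | ∃ e₁ ∈ H₁.edges, ∃ e₂ ∈ H₂.edges, E = e₁ ×ˢ e₂}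
  nonempty_edges := by
    rintro E ⟨e₁, h₁, e₂, h₂, rfl⟩
    exact (H₁.nonempty_edges e₁ h₁).product (H₂.nonempty_edges e₂ h₂)

/-- The 2-section of a hypergraph: distinct vertices are adjacent iff they lie
in a common edge. -/
def twoSection (H : Hypergraph' V) : SimpleGraph V where
  Adj x y := x ≠ y ∧ ∃ e ∈ H.edges, x ∈ e ∧ y ∈ e
  symm := by constructor; rintro x y ⟨hxy, e, he, hx, hy⟩; exact ⟨hxy.symm, e, he, hy, hx⟩
  loopless := by constructor; rintro x ⟨hx, -⟩; exact hx rfl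

end Hypergraph'

namespace SimpleGraph

variable {V₁ V₂ : Type*}

/-- The direct (tensor) product of simple graphs. -/
def directProd (G₁ : SimpleGraph V₁) (G₂ : SimpleGraph V₂) : SimpleGraph (V₁ × V₂) where
  Adj x y := G₁.Adj x.1 y.1 ∧ G₂.Adj x.2 y.2
  symm := ⟨fun _ _ ⟨h₁, h₂⟩ => ⟨h₁.symm, h₂.symm⟩⟩
  loopless := ⟨fun x h => h.1.ne rfl⟩

/-- The strong product of simple graphs. -/
def strongGraphProd (G₁ : SimpleGraph V₁) (G₂ : SimpleGraph V₂) : SimpleGraph (V₁ × V₂) where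
  Adj x y := x ≠ y ∧ ((x.1 = y.1 ∧ G₂.Adj x.2 y.2) ∨ (x.2 = y.2 ∧ G₁.Adj x.1 y.1) ∨
    (G₁.Adj x.1 y.1 ∧ G₂.Adj x.2 y.2))
  symm := by
    constructor
    rintro x y ⟨hne, (⟨h, h'⟩ | ⟨h, h'⟩ | ⟨h, h'⟩)⟩
    · exact ⟨hne.symm, Or.inl ⟨h.symm, h'.symm⟩⟩
    · exact ⟨hne.symm, Or.inr (Or.inl ⟨h.symm, h'.symm⟩)⟩
    · exact ⟨hne.symm, Or.inr (Or.inr ⟨h.symm, h'.symm⟩)⟩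
  loopless := by constructor; rintro x ⟨hx, -⟩; exact hx rfl

/-- The lexicographic product of simple graphs. -/
def lexGraphProd (G₁ : SimpleGraph V₁) (G₂ : SimpleGraph V₂) : SimpleGraph (V₁ × V₂) where
  Adj x y := G₁.Adj x.1 y.1 ∨ (x.1 = y.1 ∧ G₂.Adj x.2 y.2)
  symm := by
    constructor
    rintro x y (h | ⟨h, h'⟩)
    · exact Or.inl h.symm
    · exact Or.inr ⟨h.symm, h'.symm⟩
  loopless := by
    constructor
    rintro x (h | ⟨-, h⟩)
    · exact h.ne rfl
    · exact h.ne rfl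

end SimpleGraph

lemma key_edge {V₁ V₂ : Type*} [DecidableEq V₁] [DecidableEq V₂]
    (e₁ : Finset V₁) (e₂ : Finset V₂) (x₁ y₁ : V₁) (x₂ y₂ : V₂)
    (hx₁ : x₁ ∈ e₁) (hy₁ : y₁ ∈ e₁) (hx₂ : x₂ ∈ e₂) (hy₂ : y₂ ∈ e₂)
    (h₁ : x₁ ≠ y₁) (h₂ : x₂ ≠ y₂) (hc : e₁.card ≤ e₂.card) :
    ∃ E : Finset (V₁ × V₂), E ⊆ e₁ ×ˢ e₂ ∧ E.card = e₂.card ∧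
      E.image Prod.fst = e₁ ∧ E.image Prod.snd = e₂ ∧ (x₁, x₂) ∈ E ∧ (y₁, y₂) ∈ E := by
  classical
  set e₁' : Finset V₁ := e₁ \ {x₁, y₁} with he₁'
  set s₀ : Finset V₂ := e₂ \ {x₂, y₂} with hs₀
  have hsub₁ : ({x₁, y₁} : Finset V₁) ⊆ e₁ := by
    intro z hz
    rcases Finset.mem_insert.mp hz with rfl | hz
    · exact hx₁
    · rw [Finset.mem_singleton.mp hz]; exact hy₁
  have hsub₂ : ({x₂, y₂} : Finset V₂) ⊆ e₂ := by
    intro z hz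
    rcases Finset.mem_insert.mp hz with rfl | hz
    · exact hx₂
    · rw [Finset.mem_singleton.mp hz]; exact hy₂
  have hcard₁ : e₁'.card = e₁.card - 2 := by
    rw [he₁', Finset.card_sdiff_of_subset hsub₁,
      Finset.card_insert_of_notMem (by simpa using h₁), Finset.card_singleton]
  have hcard₀ : s₀.card = e₂.card - 2 := by
    rw [hs₀, Finset.card_sdiff_of_subset hsub₂,
      Finset.card_insert_of_notMem (by simpa using h₂), Finset.card_singleton]
  have hle : e₁'.card ≤ s₀.card := by omega
  obtain ⟨s, hs_sub, hs_card⟩ := Finset.exists_subset_card_eq hle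
  have hcc : s.card = e₁'.card := hs_card
  let g : ↥s ≃ ↥e₁' := Finset.equivOfCardEq hcc
  let f : V₂ → V₁ := fun t =>
    if t = x₂ then x₁ else if t = y₂ then y₁ else if h : t ∈ s then (g ⟨t, h⟩ : V₁) else x₁
  have hs_not : ∀ t ∈ s, t ≠ x₂ ∧ t ≠ y₂ := by
    intro t ht
    have := Finset.mem_sdiff.mp (hs_sub ht)
    constructor <;> intro h <;> apply this.2 <;> simp [h]
  have hfx : f x₂ = x₁ := by simp [f]
  have hfy : f y₂ = y₁ := by simp [f, h₂.symm]
  have hf_mem : ∀ t, f t ∈ e₁ := by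
    intro t
    by_cases h : t = x₂
    · rw [h, hfx]; exact hx₁
    by_cases h' : t = y₂
    · rw [h', hfy]; exact hy₁
    by_cases hts : t ∈ s
    · have hmem : (g ⟨t, hts⟩ : V₁) ∈ e₁' := (g ⟨t, hts⟩).2
      have := (Finset.mem_sdiff.mp hmem).1
      simp only [f, if_neg h, if_neg h', dif_pos hts]
      exact this
    · simp only [f, if_neg h, if_neg h', dif_neg hts]
      exact hx₁
  refine ⟨e₂.image (fun t => (f t, t)), ?_, ?_, ?_, ?_, ?_, ?_⟩
  · intro p hp
    obtain ⟨t, ht, rfl⟩ := Finset.mem_image.mp hp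
    exact Finset.mem_product.mpr ⟨hf_mem t, ht⟩
  · rw [Finset.card_image_of_injective]
    intro a b hab
    exact congrArg Prod.snd hab
  · rw [Finset.image_image]
    ext z
    simp only [Finset.mem_image, Function.comp]
    constructor
    · rintro ⟨t, ht, rfl⟩
      exact hf_mem t
    · intro hz
      by_cases hzx : z = x₁
      · exact ⟨x₂, hx₂, by rw [hfx, hzx]⟩
      by_cases hzy : z = y₁
      · exact ⟨y₂, hy₂, by rw [hfy, hzy]⟩
      · have hz' : z ∈ e₁' := Finset.mem_sdiff.mpr ⟨hz, by simp [hzx, hzy]⟩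
        set t := g.symm ⟨z, hz'⟩ with htdef
        have ht : (t : V₂) ∈ s := t.2
        have hne := hs_not t ht
        refine ⟨t, (Finset.mem_sdiff.mp (hs_sub ht)).1, ?_⟩
        show f t = z
        simp only [f, if_neg hne.1, if_neg hne.2, dif_pos ht]
        have heq : (⟨(t : V₂), ht⟩ : ↥s) = t := Subtype.ext rfl
        rw [heq, htdef, g.apply_symm_apply]
  · rw [Finset.image_image]
    ext t
    simp [Function.comp]
  · exact Finset.mem_image.mpr ⟨x₂, hx₂, by rw [Prod.mk.injEq]; exact ⟨hfx, rfl⟩⟩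
  · exact Finset.mem_image.mpr ⟨y₂, hy₂, by rw [Prod.mk.injEq]; exact ⟨hfy, rfl⟩⟩

/-- the 2-section of the strong product is the strong product of the
2-sections. -/
theorem twoSection_strongProd {V₁ V₂ : Type*} [Fintype V₁] [Nonempty V₁] [DecidableEq V₁]
    [Fintype V₂] [Nonempty V₂] [DecidableEq V₂] (H₁ : Hypergraph' V₁) (H₂ : Hypergraph' V₂) :
    (H₁.strongProd H₂).twoSection =
      SimpleGraph.strongGraphProd H₁.twoSection H₂.twoSection := by
  ext ⟨x₁, x₂⟩ ⟨y₁, y₂⟩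
  constructor
  · rintro ⟨hne, E, hE, hx, hy⟩
    refine ⟨hne, ?_⟩
    rcases hE with (⟨x, f, hf, rfl⟩ | ⟨e, he, y, rfl⟩) | ⟨e₁, he₁, e₂, he₂, hsub, -, -, -⟩
    · rw [Finset.mem_product, Finset.mem_singleton] at hx hy
      obtain ⟨hx1, hx2⟩ := hx
      obtain ⟨hy1, hy2⟩ := hy
      refine Or.inl ⟨hx1.trans hy1.symm, ?_, f, hf, hx2, hy2⟩
      intro h
      exact hne (Prod.ext (hx1.trans hy1.symm) h)
    · rw [Finset.mem_product, Finset.mem_singleton] at hx hy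
      obtain ⟨hx1, hx2⟩ := hx
      obtain ⟨hy1, hy2⟩ := hy
      refine Or.inr (Or.inl ⟨hx2.trans hy2.symm, ?_, e, he, hx1, hy1⟩)
      intro h
      exact hne (Prod.ext h (hx2.trans hy2.symm))
    · have hx' := Finset.mem_product.mp (hsub hx)
      have hy' := Finset.mem_product.mp (hsub hy)
      by_cases h1 : x₁ = y₁
      · have h2 : x₂ ≠ y₂ := fun h => hne (Prod.ext h1 h)
        exact Or.inl ⟨h1, h2, e₂, he₂, hx'.2, hy'.2⟩
      by_cases h2 : x₂ = y₂
      · exact Or.inr (Or.inl ⟨h2, h1, e₁, he₁, hx'.1, hy'.1⟩)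
      · exact Or.inr (Or.inr ⟨⟨h1, e₁, he₁, hx'.1, hy'.1⟩, ⟨h2, e₂, he₂, hx'.2, hy'.2⟩⟩)
  · rintro ⟨hne, (⟨h1, h2, e₂, he₂, hm, hm'⟩ | ⟨h2, h1, e₁, he₁, hm, hm'⟩ |
      ⟨⟨h1, e₁, he₁, hx₁, hy₁⟩, ⟨h2, e₂, he₂, hx₂, hy₂⟩⟩)⟩
    · subst h1
      exact ⟨hne, {x₁} ×ˢ e₂, Or.inl (Or.inl ⟨x₁, e₂, he₂, rfl⟩),
        Finset.mem_product.mpr ⟨Finset.mem_singleton_self _, hm⟩,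
        Finset.mem_product.mpr ⟨Finset.mem_singleton_self _, hm'⟩⟩
    · subst h2
      exact ⟨hne, e₁ ×ˢ {x₂}, Or.inl (Or.inr ⟨e₁, he₁, x₂, rfl⟩),
        Finset.mem_product.mpr ⟨hm, Finset.mem_singleton_self _⟩,
        Finset.mem_product.mpr ⟨hm', Finset.mem_singleton_self _⟩⟩
    · rcases le_total e₁.card e₂.card with hc | hc
      · obtain ⟨E, hsub, hcard, hp1, hp2, hxE, hyE⟩ :=
          key_edge e₁ e₂ x₁ y₁ x₂ y₂ hx₁ hy₁ hx₂ hy₂ h1 h2 hc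
        exact ⟨hne, E, Or.inr ⟨e₁, he₁, e₂, he₂, hsub,
          by rw [hcard, max_eq_right hc], hp1, hp2⟩, hxE, hyE⟩
      · obtain ⟨E, hsub, hcard, hp1, hp2, hxE, hyE⟩ :=
          key_edge e₂ e₁ x₂ y₂ x₁ y₁ hx₂ hy₂ hx₁ hy₁ h2 h1 hc
        refine ⟨hne, E.image Prod.swap, Or.inr ⟨e₁, he₁, e₂, he₂, ?_, ?_, ?_, ?_⟩,
          Finset.mem_image.mpr ⟨(x₂, x₁), hxE, rfl⟩,
          Finset.mem_image.mpr ⟨(y₂, y₁), hyE, rfl⟩⟩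
        · intro p hp
          obtain ⟨q, hq, rfl⟩ := Finset.mem_image.mp hp
          have := Finset.mem_product.mp (hsub hq)
          exact Finset.mem_product.mpr ⟨this.2, this.1⟩
        · rw [Finset.card_image_of_injective _ Prod.swap_injective, hcard,
            max_eq_left hc]
        · rw [Finset.image_image]
          exact hp2
        · rw [Finset.image_image]
          exact hp1
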